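/- Let A_7' be the sublattice of E_8 generated by -e_1 - e_2 and e_i - e_{i+1} for i = 2,...,7. Then the orthogonal complement of A_7' in E_8 is generated by j - 2e_1, a vector of norm 8; consequently, no automorphism of E_8 in the Weyl group maps the standard copy A_7 (integer vectors with zero coordinate sum) onto A_7'. -/

import Mathlib

open Matrix

/-- The standard basis vector `e_k` of `ℝ^N`. -/
def e {N : ℕ} (k : Fin N) : Fin N → ℝ := fun j => if j = k then 1 else 0

/-- The root lattice `D_8` (as a set): integer vectors with even coordinate sum. -/
def D8set : Set (Fin 8 → ℝ) :=
  {v | (∀ i, ∃ z : ℤ, v i = (z : ℝ)) ∧ ∃ k : ℤ, ∑ i, v i = 2 * (k : ℝ)}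

/-- The all-ones vector `j` in `ℝ^8`. -/
def jv : Fin 8 → ℝ := fun _ => 1

/-- The root lattice `E_8` (as a set): `E_8 = D_8 ∪ (j/2 + D_8)`. -/
def E8set : Set (Fin 8 → ℝ) :=
  D8set ∪ {v | ∃ w ∈ D8set, v = (2 : ℝ)⁻¹ • jv + w}

/-- The copy of `A_7` inside `E_8` (as a set): integer vectors with coordinate sum `0`. -/
def A7set : Set (Fin 8 → ℝ) :=
  {v | (∀ i, ∃ z : ℤ, v i = (z : ℝ)) ∧ ∑ i, v i = 0}


/-- The generators `-e_1 - e_2` and `e_i - e_{i+1}` (`i = 2, …, 7`) of the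
sublattice `A_7'` of `E_8` (all `0`-indexed below). -/
def A7'gens : Set (Fin 8 → ℝ) :=
  insert (-(e 0) - e 1)
    {v | ∃ k : Fin 6, v = e ⟨(k : ℕ) + 1, by have := k.isLt; omega⟩ -
      e ⟨(k : ℕ) + 2, by have := k.isLt; omega⟩}

-- auxiliary
def uu : Fin 8 → ℝ := jv - (2 : ℝ) • e 0

lemma dot_e (v : Fin 8 → ℝ) (k : Fin 8) : v ⬝ᵥ e k = v k := by
  simp [e, dotProduct]

lemma uu_apply (i : Fin 8) : uu i = if i = 0 then -1 else 1 := by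
  by_cases h : i = 0 <;> simp [uu, jv, e, h] <;> norm_num

lemma uu_ortho : ∀ a ∈ A7'gens, uu ⬝ᵥ a = 0 := by
  rintro a (rfl | ⟨k, rfl⟩)
  · rw [dotProduct_sub, dotProduct_neg, dot_e, dot_e, uu_apply, uu_apply]
    norm_num
  · rw [dotProduct_sub, dot_e, dot_e, uu_apply, uu_apply]
    rw [if_neg (Fin.ne_of_val_ne (by simp)), if_neg (Fin.ne_of_val_ne (by simp))]; norm_num

lemma ortho_span {v : Fin 8 → ℝ} (h : ∀ a ∈ A7'gens, v ⬝ᵥ a = 0) :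
    ∀ a ∈ Submodule.span ℤ A7'gens, v ⬝ᵥ a = 0 := by
  intro a ha
  induction ha using Submodule.span_induction with
  | mem x hx => exact h x hx
  | zero => simp
  | add x y _ _ hx hy => rw [dotProduct_add, hx, hy, add_zero]
  | smul z x _ hx => rw [← Int.cast_smul_eq_zsmul ℝ, dotProduct_smul, hx, smul_zero]

lemma forward {v : Fin 8 → ℝ} (hE : v ∈ E8set) (h : ∀ a ∈ A7'gens, v ⬝ᵥ a = 0) :
    ∃ z : ℤ, v = z • uu := by
  have h0 : v 0 + v 1 = 0 := by
    have := h _ (Set.mem_insert _ _)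
    rw [dotProduct_sub, dotProduct_neg, dot_e, dot_e] at this
    linarith
  have hk : ∀ k : Fin 6, v ⟨(k : ℕ) + 1, by have := k.isLt; omega⟩ =
      v ⟨(k : ℕ) + 2, by have := k.isLt; omega⟩ := by
    intro k
    have := h _ (Set.mem_insert_of_mem _ ⟨k, rfl⟩)
    rw [dotProduct_sub, dot_e, dot_e] at this
    linarith
  have q1 : v 1 = v 2 := hk 0
  have q2 : v 2 = v 3 := hk 1
  have q3 : v 3 = v 4 := hk 2
  have q4 : v 4 = v 5 := hk 3
  have q5 : v 5 = v 6 := hk 4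
  have q6 : v 6 = v 7 := hk 5
  have hvsum : ∑ i, v i = 6 * v 1 := by rw [Fin.sum_univ_eight]; linarith
  have key : ∀ c : ℤ, v 1 = (c : ℝ) → v = c • uu := by
    intro c hc
    funext i
    fin_cases i <;> simp [Pi.smul_apply, uu_apply, zsmul_eq_mul] <;> linarith
  rcases hE with ⟨hint, k, hsum⟩ | ⟨w, ⟨hwint, k, hwsum⟩, hvw⟩
  · obtain ⟨z, hz⟩ := hint 1
    exact ⟨z, key z hz⟩
  · exfalso
    obtain ⟨z, hz⟩ := hwint 1
    have hv1 : v 1 = 2⁻¹ + (z : ℝ) := by rw [hvw]; simp [jv, hz]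
    have hsum2 : ∑ i, v i = 4 + 2 * (k : ℝ) := by
      rw [hvw, Fin.sum_univ_eight] at *
      simp only [Pi.add_apply, Pi.smul_apply, jv, smul_eq_mul]
      linarith
    have hcast : (6 * z : ℝ) = 1 + 2 * k := by
      rw [hv1] at hvsum
      linarith
    have : (6 * z : ℤ) = 1 + 2 * k := by exact_mod_cast hcast
    omega

lemma hsetlem : {v : Fin 8 → ℝ | v ∈ E8set ∧ ∀ a ∈ Submodule.span ℤ A7'gens, v ⬝ᵥ a = 0} =
    {v : Fin 8 → ℝ | ∃ z : ℤ, v = z • uu} := by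
  ext v
  constructor
  · rintro ⟨hE, h⟩
    exact forward hE (fun a ha => h a (Submodule.subset_span ha))
  · rintro ⟨z, rfl⟩
    refine ⟨Or.inl ⟨fun i => ⟨if i = 0 then -z else z, ?_⟩, 3 * z, ?_⟩, ortho_span ?_⟩
    · by_cases h : i = 0 <;> simp [Pi.smul_apply, uu_apply, h]
    · simp [Fin.sum_univ_eight, Pi.smul_apply, uu_apply]
      push_cast
      ring
    · intro a ha
      rw [← Int.cast_smul_eq_zsmul ℝ, smul_dotProduct, uu_ortho a ha, smul_zero]

lemma uu_norm : uu ⬝ᵥ uu = 8 := by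
  have : ∀ i, uu i = if i = 0 then -1 else 1 := uu_apply
  simp [dotProduct, Fin.sum_univ_eight, this]
  norm_num

/-- The orthogonal complement of `A_7' := ⟨-e_1 - e_2, e_2 - e_3, …, e_7 - e_8⟩`
in `E_8` is generated by `j - 2e_1`, a vector of norm `8`; consequently no
automorphism of `E_8` (a linear bijection preserving inner products and mapping
`E_8` onto itself — in particular no element of the Weyl group) maps the standard
copy of `A_7` onto `A_7'`. -/
theorem stmt12 :
    {v : Fin 8 → ℝ | v ∈ E8set ∧ ∀ a ∈ Submodule.span ℤ A7'gens, v ⬝ᵥ a = 0} =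
      {v : Fin 8 → ℝ | ∃ z : ℤ, v = z • (jv - (2 : ℝ) • e 0)} ∧
    (jv - (2 : ℝ) • e 0) ⬝ᵥ (jv - (2 : ℝ) • e 0) = 8 ∧
    ¬ ∃ f : (Fin 8 → ℝ) ≃ₗ[ℝ] (Fin 8 → ℝ),
        (∀ x y, f x ⬝ᵥ f y = x ⬝ᵥ y) ∧ f '' E8set = E8set ∧
        f '' A7set = (Submodule.span ℤ A7'gens : Set (Fin 8 → ℝ)) := by
  refine ⟨hsetlem, uu_norm, ?_⟩
  rintro ⟨f, hdot, hE8, hA7⟩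
  have hhE : (2 : ℝ)⁻¹ • jv ∈ E8set := by
    right
    exact ⟨0, ⟨fun i => ⟨0, by simp⟩, 0, by simp⟩, by simp⟩
  have hfh : f ((2 : ℝ)⁻¹ • jv) ∈ E8set := by
    rw [← hE8]; exact Set.mem_image_of_mem f hhE
  have hortho : ∀ a ∈ Submodule.span ℤ A7'gens, f ((2 : ℝ)⁻¹ • jv) ⬝ᵥ a = 0 := by
    intro a ha
    have : a ∈ f '' A7set := by rw [hA7]; exact ha
    obtain ⟨x, hx, rfl⟩ := this
    rw [hdot]
    have : ((2 : ℝ)⁻¹ • jv) ⬝ᵥ x = 2⁻¹ * ∑ i, x i := by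
      simp [dotProduct, jv, Finset.mul_sum]
    rw [this, hx.2, mul_zero]
  have hmem : f ((2 : ℝ)⁻¹ • jv) ∈ {v : Fin 8 → ℝ | ∃ z : ℤ, v = z • uu} := by
    rw [← hsetlem]; exact ⟨hfh, hortho⟩
  obtain ⟨z, hz⟩ := hmem
  have h2 : f ((2 : ℝ)⁻¹ • jv) ⬝ᵥ f ((2 : ℝ)⁻¹ • jv) = 2 := by
    rw [hdot]
    simp [dotProduct, jv, Fin.sum_univ_eight]
    norm_num
  rw [hz, ← Int.cast_smul_eq_zsmul ℝ, smul_dotProduct, dotProduct_smul, uu_norm] at h2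
  have : ((4 * z ^ 2 : ℤ) : ℝ) = 1 := by simp only [smul_eq_mul] at h2; push_cast; nlinarith [h2]
  have : (4 * z ^ 2 : ℤ) = 1 := by exact_mod_cast this
  omega
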